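/- Let n ≥ 1, let ι be a nonempty finite index set, and let m : ι → ℝⁿ satisfy: (a) for every j ∈ ι there exists u ∈ ℝⁿ with ⟨m_j, u⟩ < ⟨m_l, u⟩ for all l ≠ j; and (b) the convex hull of {m_j : j ∈ ι} has nonempty interior in ℝⁿ. Define F(u) = min_{j ∈ ι} ⟨m_j, u⟩. Let ε > 0 and let η : ℝⁿ → ℝ be C^∞, nonnegative, with support contained in the closed ball of radius ε about 0 and with ∫ η = 1. Then the mollification H = F ⋆ η is smooth and the range of its gradient map ∇H : ℝⁿ → ℝⁿ is exactly the polytope convexHull{m_j : j ∈ ι}. -/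

import Mathlib

open scoped RealInnerProductSpace
open MeasureTheory Metric Set Filter Topology
set_option linter.unusedSectionVars false
set_option linter.unusedVariables false

namespace Statement2Aux

variable {n : ℕ} {ι : Type} [Fintype ι]

noncomputable def FF (m : ι → EuclideanSpace ℝ (Fin n)) (S : Finset ι) (hS : S.Nonempty)
    (u : EuclideanSpace ℝ (Fin n)) : ℝ := S.inf' hS fun j => ⟪m j, u⟫

noncomputable def HH (m : ι → EuclideanSpace ℝ (Fin n)) (η : EuclideanSpace ℝ (Fin n) → ℝ)
    (S : Finset ι) (hS : S.Nonempty) (x : EuclideanSpace ℝ (Fin n)) : ℝ :=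
  ∫ y, FF m S hS (x - y) * η y

variable {m : ι → EuclideanSpace ℝ (Fin n)} {η : EuclideanSpace ℝ (Fin n) → ℝ}
  {S : Finset ι} {hS : S.Nonempty}

theorem FF_cont : Continuous (FF m S hS) := by
  unfold FF
  apply continuous_iff_continuousAt.2
  intro x
  exact ContinuousAt.finset_inf'_apply hS fun j _ => (continuous_const.inner continuous_id).continuousAt

theorem FF_le {j : ι} (hj : j ∈ S) (u : EuclideanSpace ℝ (Fin n)) :
    FF m S hS u ≤ ⟪m j, u⟫ := Finset.inf'_le _ hj

theorem FF_exists (u : EuclideanSpace ℝ (Fin n)) : ∃ j ∈ S, FF m S hS u = ⟪m j, u⟫ := by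
  obtain ⟨j, hj, h⟩ := S.exists_mem_eq_inf' hS fun j => ⟪m j, u⟫
  exact ⟨j, hj, h⟩

theorem inf'_add_const (f : ι → ℝ) (c : ℝ) :
    (S.inf' hS fun j => f j + c) = S.inf' hS f + c := by
  apply le_antisymm
  · obtain ⟨j, hj, h⟩ := S.exists_mem_eq_inf' hS f
    rw [h]
    exact Finset.inf'_le _ hj
  · obtain ⟨j, hj, h⟩ := S.exists_mem_eq_inf' hS fun j => f j + c
    rw [h]
    exact add_le_add_left (Finset.inf'_le _ hj) c

theorem FF_add_le (u w : EuclideanSpace ℝ (Fin n)) :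
    FF m S hS (u + w) ≤ FF m S hS u + S.sup' hS fun j => ⟪m j, w⟫ := by
  obtain ⟨j, hj, h⟩ := FF_exists (m := m) (hS := hS) u
  calc FF m S hS (u + w) ≤ ⟪m j, u + w⟫ := FF_le hj _
    _ = ⟪m j, u⟫ + ⟪m j, w⟫ := inner_add_right _ _ _
    _ ≤ FF m S hS u + S.sup' hS fun j => ⟪m j, w⟫ := by
        rw [← h]; exact add_le_add_right (Finset.le_sup' (fun j => (⟪m j, w⟫ : ℝ)) hj) _

theorem sup_inner_le (w : EuclideanSpace ℝ (Fin n)) :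
    (S.sup' hS fun j => ⟪m j, w⟫) ≤ (S.sup' hS fun j => ‖m j‖) * ‖w‖ := by
  apply Finset.sup'_le
  intro j hj
  calc ⟪m j, w⟫ ≤ ‖m j‖ * ‖w‖ := real_inner_le_norm _ _
    _ ≤ (S.sup' hS fun j => ‖m j‖) * ‖w‖ :=
        mul_le_mul_of_nonneg_right (Finset.le_sup' (fun j => ‖m j‖) hj) (norm_nonneg _)
theorem integrable_mul_eta {ε : ℝ} (hηcont : Continuous η)
    (hηsupp : Function.support η ⊆ Metric.closedBall 0 ε)
    (f : EuclideanSpace ℝ (Fin n) → ℝ) (hf : Continuous f) :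
    Integrable fun y => f y * η y := by
  apply Continuous.integrable_of_hasCompactSupport (hf.mul hηcont)
  apply HasCompactSupport.intro (isCompact_closedBall (0 : EuclideanSpace ℝ (Fin n)) ε)
  intro y hy
  have : η y = 0 := by
    by_contra h
    exact hy (hηsupp h)
  simp [this]

theorem integrable_FF_mul {ε : ℝ} (hηcont : Continuous η)
    (hηsupp : Function.support η ⊆ Metric.closedBall 0 ε) (x : EuclideanSpace ℝ (Fin n)) :
    Integrable fun y => FF m S hS (x - y) * η y :=
  integrable_mul_eta hηcont hηsupp _ (FF_cont.comp (continuous_const.sub continuous_id))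

theorem HH_smooth {ε : ℝ} (hηsmooth : ContDiff ℝ (⊤ : ℕ∞) η)
    (hηsupp : Function.support η ⊆ Metric.closedBall 0 ε) :
    ContDiff ℝ (⊤ : ℕ∞) (HH m η S hS) := by
  have hcs : HasCompactSupport η := by
    apply HasCompactSupport.intro (isCompact_closedBall (0 : EuclideanSpace ℝ (Fin n)) ε)
    intro y hy
    by_contra h
    exact hy (hηsupp h)
  have h := hcs.contDiff_convolution_left (L := ContinuousLinearMap.mul ℝ ℝ) (μ := volume) hηsmooth
    (FF_cont (m := m) (S := S) (hS := hS)).locallyIntegrable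
  have : HH m η S hS = convolution η (FF m S hS) (ContinuousLinearMap.mul ℝ ℝ) volume := by
    funext x
    rw [convolution_def]
    unfold HH
    congr 1
    funext y
    simp [mul_comm]
  rw [this]
  exact h

theorem eta_self_integrable {ε : ℝ} (hηcont : Continuous η)
    (hηsupp : Function.support η ⊆ Metric.closedBall 0 ε) :
    Integrable η := by
  simpa using integrable_mul_eta (n := n) hηcont hηsupp (fun _ => 1) continuous_const

/-- `HH ≤ FF + C * ε` where `C = sup ‖m j‖`. -/
theorem HH_le {ε : ℝ} (hε : 0 < ε) (hηcont : Continuous η) (hηnonneg : ∀ y, 0 ≤ η y)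
    (hηsupp : Function.support η ⊆ Metric.closedBall 0 ε) (hηone : ∫ y, η y = 1)
    (x : EuclideanSpace ℝ (Fin n)) :
    HH m η S hS x ≤ FF m S hS x + (S.sup' hS fun j => ‖m j‖) * ε := by
  set C := S.sup' hS fun j => ‖m j‖ with hC
  have hC0 : 0 ≤ C := by
    obtain ⟨j, hj⟩ := hS
    exact le_trans (norm_nonneg (m j)) (Finset.le_sup' (fun j => ‖m j‖) hj)
  have key : ∀ y, FF m S hS (x - y) * η y ≤ (FF m S hS x + C * ε) * η y := by
    intro y
    rcases eq_or_ne (η y) 0 with h | h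
    · simp [h]
    · have hy : y ∈ Metric.closedBall (0 : EuclideanSpace ℝ (Fin n)) ε := hηsupp h
      have hny : ‖y‖ ≤ ε := by simpa using hy
      apply mul_le_mul_of_nonneg_right _ (hηnonneg y)
      calc FF m S hS (x - y) ≤ FF m S hS x + S.sup' hS fun j => ⟪m j, -y⟫ := by
            rw [sub_eq_add_neg]; exact FF_add_le x (-y)
        _ ≤ FF m S hS x + C * ‖-y‖ := add_le_add_right (sup_inner_le _) _
        _ ≤ FF m S hS x + C * ε := by
            rw [norm_neg]
            exact add_le_add_right (mul_le_mul_of_nonneg_left hny hC0) _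
  calc HH m η S hS x ≤ ∫ y, (FF m S hS x + C * ε) * η y :=
        integral_mono (integrable_FF_mul hηcont hηsupp x)
          ((eta_self_integrable hηcont hηsupp).const_mul _) key
    _ = FF m S hS x + C * ε := by rw [integral_const_mul, hηone, mul_one]

theorem HH_mono {ε : ℝ} (hηcont : Continuous η) (hηnonneg : ∀ y, 0 ≤ η y)
    (hηsupp : Function.support η ⊆ Metric.closedBall 0 ε)
    {S' : Finset ι} (hS' : S'.Nonempty) (hsub : S' ⊆ S) (x : EuclideanSpace ℝ (Fin n)) :
    HH m η S hS x ≤ HH m η S' hS' x := by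
  apply integral_mono (integrable_FF_mul hηcont hηsupp x) (integrable_FF_mul hηcont hηsupp x)
  intro y
  unfold FF
  exact mul_le_mul_of_nonneg_right
    (Finset.inf'_mono (f := fun j => (⟪m j, x - y⟫ : ℝ)) hsub hS') (hηnonneg y)

theorem FF_shift {v : EuclideanSpace ℝ (Fin n)} {c : ℝ} (h : ∀ j ∈ S, ⟪m j, v⟫ = c)
    (u : EuclideanSpace ℝ (Fin n)) : FF m S hS (u + v) = FF m S hS u + c := by
  unfold FF
  rw [← inf'_add_const (fun j => ⟪m j, u⟫) c]
  exact Finset.inf'_congr hS rfl fun j hj => by rw [inner_add_right, h j hj]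

theorem HH_shift {ε : ℝ} (hηcont : Continuous η)
    (hηsupp : Function.support η ⊆ Metric.closedBall 0 ε) (hηone : ∫ y, η y = 1)
    {v : EuclideanSpace ℝ (Fin n)} {c : ℝ} (h : ∀ j ∈ S, ⟪m j, v⟫ = c)
    (x : EuclideanSpace ℝ (Fin n)) : HH m η S hS (x + v) = HH m η S hS x + c := by
  unfold HH
  have : ∀ y, FF m S hS (x + v - y) * η y = FF m S hS (x - y) * η y + c * η y := by
    intro y
    have : x + v - y = (x - y) + v := by abel
    rw [this, FF_shift h, add_mul]
  simp_rw [this]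
  rw [integral_add (integrable_FF_mul hηcont hηsupp x)
    ((eta_self_integrable hηcont hηsupp).const_mul _), integral_const_mul, hηone, mul_one]

theorem FF_le_inner {p : EuclideanSpace ℝ (Fin n)}
    (hp : p ∈ convexHull ℝ (m '' ↑S)) (x : EuclideanSpace ℝ (Fin n)) :
    FF m S hS x ≤ ⟪p, x⟫ := by
  have hsub : m '' ↑S ⊆ {w : EuclideanSpace ℝ (Fin n) | FF m S hS x ≤ ⟪w, x⟫} := by
    rintro w ⟨j, hj, rfl⟩
    exact FF_le (by simpa using hj) x
  have hconv : Convex ℝ {w : EuclideanSpace ℝ (Fin n) | FF m S hS x ≤ ⟪w, x⟫} := by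
    apply convex_halfSpace_ge
    exact ⟨fun a b => inner_add_left a b x, fun c a => real_inner_smul_left a x c⟩
  exact convexHull_min hsub hconv hp

theorem sup'_const_mul {t : ℝ} (ht : 0 ≤ t) (f : ι → ℝ) :
    (S.sup' hS fun j => t * f j) = t * S.sup' hS f := by
  apply le_antisymm
  · apply Finset.sup'_le
    intro j hj
    exact mul_le_mul_of_nonneg_left (Finset.le_sup' f hj) ht
  · obtain ⟨j, hj, h⟩ := S.exists_mem_eq_sup' hS f
    rw [h]
    exact Finset.le_sup' (fun j => t * f j) hj

theorem HH_add_le {ε : ℝ} (hηcont : Continuous η) (hηnonneg : ∀ y, 0 ≤ η y)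
    (hηsupp : Function.support η ⊆ Metric.closedBall 0 ε) (hηone : ∫ y, η y = 1)
    (x w : EuclideanSpace ℝ (Fin n)) :
    HH m η S hS (x + w) ≤ HH m η S hS x + S.sup' hS fun j => ⟪m j, w⟫ := by
  set M := S.sup' hS fun j => ⟪m j, w⟫ with hM
  have key : ∀ y, FF m S hS (x + w - y) * η y ≤ (FF m S hS (x - y) + M) * η y := by
    intro y
    apply mul_le_mul_of_nonneg_right _ (hηnonneg y)
    have h1 : x + w - y = (x - y) + w := by abel
    rw [h1]
    exact FF_add_le (x - y) w
  calc HH m η S hS (x + w) ≤ ∫ y, (FF m S hS (x - y) + M) * η y :=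
        integral_mono (integrable_FF_mul hηcont hηsupp _) (by
          simp_rw [add_mul]
          exact (integrable_FF_mul hηcont hηsupp x).add
            ((eta_self_integrable hηcont hηsupp).const_mul _)) key
    _ = HH m η S hS x + M := by
        simp_rw [add_mul]
        rw [integral_add (integrable_FF_mul hηcont hηsupp x)
          ((eta_self_integrable hηcont hηsupp).const_mul _), integral_const_mul, hηone, mul_one]
        rfl

theorem isMaxOn_gradient {ε : ℝ} (hηsmooth : ContDiff ℝ (⊤ : ℕ∞) η)
    (hηsupp : Function.support η ⊆ Metric.closedBall 0 ε)
    {p x : EuclideanSpace ℝ (Fin n)}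
    (hmax : ∀ y, HH m η S hS y - ⟪p, y⟫ ≤ HH m η S hS x - ⟪p, x⟫) :
    gradient (HH m η S hS) x = p := by
  set G : EuclideanSpace ℝ (Fin n) → ℝ := fun y => HH m η S hS y - ⟪p, y⟫ with hGdef
  have hHd : Differentiable ℝ (HH m η S hS) :=
    (HH_smooth hηsmooth hηsupp).differentiable (by simp)
  have hinner : Differentiable ℝ (fun y : EuclideanSpace ℝ (Fin n) => (⟪p, y⟫ : ℝ)) :=
    (innerSL ℝ p).differentiable
  have hGd : Differentiable ℝ G := hHd.sub hinner
  have hlocal : IsLocalMax G x := Filter.Eventually.of_forall hmax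
  have hfG : HasFDerivAt G (0 : EuclideanSpace ℝ (Fin n) →L[ℝ] ℝ) x := by
    have h0 : fderiv ℝ G x = 0 := hlocal.fderiv_eq_zero
    rw [← h0]
    exact (hGd x).hasFDerivAt
  have hfi : HasFDerivAt (fun y : EuclideanSpace ℝ (Fin n) => (⟪p, y⟫ : ℝ))
      (innerSL ℝ p) x := (innerSL ℝ p).hasFDerivAt
  have hfH : HasFDerivAt (HH m η S hS) (0 + innerSL ℝ p) x := by
    have h := hfG.add hfi
    have heq : (fun y => G y + ⟪p, y⟫) = HH m η S hS := by
      funext y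
      simp [hGdef]
    rw [← heq]; exact h
  have : HasGradientAt (HH m η S hS) p x := by
    rw [hasGradientAt_iff_hasFDerivAt]
    refine hfH.congr_fderiv ?_
    ext y
    simp [InnerProductSpace.toDual_apply_apply]
  exact this.gradient

theorem gradient_mem {ε : ℝ} (hε : 0 < ε) (hηsmooth : ContDiff ℝ (⊤ : ℕ∞) η)
    (hηnonneg : ∀ y, 0 ≤ η y)
    (hηsupp : Function.support η ⊆ Metric.closedBall 0 ε) (hηone : ∫ y, η y = 1)
    (x : EuclideanSpace ℝ (Fin n)) :
    gradient (HH m η S hS) x ∈ convexHull ℝ (m '' ↑S) := by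
  set p := gradient (HH m η S hS) x with hp
  have hHd : Differentiable ℝ (HH m η S hS) :=
    (HH_smooth hηsmooth hηsupp).differentiable (by simp)
  have hfd : HasFDerivAt (HH m η S hS) (InnerProductSpace.toDual ℝ _ p) x :=
    hasGradientAt_iff_hasFDerivAt.1 ((hHd x).hasGradientAt)
  -- directional derivative bound
  have key : ∀ v : EuclideanSpace ℝ (Fin n), ⟪p, v⟫ ≤ S.sup' hS fun j => ⟪m j, v⟫ := by
    intro v
    set M := S.sup' hS fun j => ⟪m j, v⟫ with hM
    set g : ℝ → EuclideanSpace ℝ (Fin n) := fun t => x + t • v with hgdef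
    have hg : HasDerivAt g v 0 := by
      have h1 : HasDerivAt (fun t : ℝ => t • v) ((1 : ℝ) • v) 0 :=
        (hasDerivAt_id 0).smul_const v
      rw [one_smul] at h1
      exact h1.const_add x
    have hcomp : HasDerivAt (fun t => HH m η S hS (g t)) (⟪p, v⟫) 0 := by
      have hg0 : g 0 = x := by simp [hgdef]
      have hfd' : HasFDerivAt (HH m η S hS) (InnerProductSpace.toDual ℝ _ p) (g 0) := by
        rw [hg0]; exact hfd
      have := hfd'.comp_hasDerivAt 0 hg
      exact this
    have hslope : ∀ t ∈ Set.Ioi (0:ℝ),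
        slope (fun t => HH m η S hS (g t)) 0 t ≤ M := by
      intro t ht
      have ht' : (0:ℝ) < t := ht
      have hb : HH m η S hS (g t) - HH m η S hS (g 0) ≤ t * M := by
        have := HH_add_le (m := m) (S := S) (hS := hS) hηsmooth.continuous hηnonneg hηsupp
          hηone x (t • v)
        have hsup : (S.sup' hS fun j => ⟪m j, t • v⟫) = t * M := by
          rw [hM, ← sup'_const_mul (le_of_lt ht')]
          exact Finset.sup'_congr hS rfl fun j hj => real_inner_smul_right _ _ _
        simp only [hgdef, hsup] at this ⊢
        simp only [zero_smul, add_zero]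
        linarith
      rw [slope_def_field, sub_zero, div_le_iff₀ ht']
      linarith
    have htend : Filter.Tendsto (slope (fun t => HH m η S hS (g t)) 0)
        (nhdsWithin 0 (Set.Ioi 0)) (nhds ⟪p, v⟫) := by
      have h1 := hasDerivAt_iff_tendsto_slope.1 hcomp
      exact h1.mono_left (nhdsWithin_mono 0 fun t ht => ne_of_gt ht)
    exact le_of_tendsto htend (eventually_nhdsWithin_of_forall hslope)
  -- separation
  by_contra hnot
  have hclosed : IsClosed (convexHull ℝ (m '' ↑S)) :=
    (S.finite_toSet.image m).isClosed_convexHull (𝕜 := ℝ)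
  obtain ⟨f, u, hfu, hup⟩ :=
    geometric_hahn_banach_closed_point (convex_convexHull ℝ _) hclosed hnot
  set v := (InnerProductSpace.toDual ℝ (EuclideanSpace ℝ (Fin n))).symm f with hv
  have hfv : ∀ w, ⟪v, w⟫ = f w := fun w => InnerProductSpace.toDual_symm_apply
  have h1 : ⟪p, v⟫ ≤ S.sup' hS fun j => ⟪m j, v⟫ := key v
  have h2 : (S.sup' hS fun j => ⟪m j, v⟫) < u := by
    rw [Finset.sup'_lt_iff]
    intro j hj
    rw [real_inner_comm, hfv]
    exact hfu _ (subset_convexHull ℝ _ ⟨j, by simpa using hj, rfl⟩)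
  have h3 : f p = ⟪p, v⟫ := by rw [← hfv, real_inner_comm]
  linarith

set_option maxHeartbeats 1000000 in
theorem exists_isMaxOn {ε : ℝ} (hε : 0 < ε) (hηsmooth : ContDiff ℝ (⊤ : ℕ∞) η)
    (hηnonneg : ∀ y, 0 ≤ η y)
    (hηsupp : Function.support η ⊆ Metric.closedBall 0 ε) (hηone : ∫ y, η y = 1) :
    ∀ (N : ℕ) (S : Finset ι) (hS : S.Nonempty), S.card ≤ N →
      ∀ p ∈ convexHull ℝ (m '' ↑S),
        ∃ x, ∀ y, HH m η S hS y - ⟪p, y⟫ ≤ HH m η S hS x - ⟪p, x⟫ := by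
  intro N
  induction N with
  | zero =>
    intro S hS hcard
    exact absurd (Finset.card_pos.2 hS) (by omega)
  | succ N IH =>
    intro S hS hcard p hp
    classical
    set G : EuclideanSpace ℝ (Fin n) → ℝ := fun y => HH m η S hS y - ⟪p, y⟫ with hGdef
    by_contra hno
    push_neg at hno
    have hGcont : Continuous G :=
      ((HH_smooth hηsmooth hηsupp).continuous).sub (continuous_const.inner continuous_id)
    set W : Submodule ℝ (EuclideanSpace ℝ (Fin n)) :=
      Submodule.span ℝ ((fun j => m j - p) '' ↑S) with hWdef
    have hWclosed : IsClosed (W : Set (EuclideanSpace ℝ (Fin n))) :=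
      W.closed_of_finiteDimensional
    have hshiftv : ∀ v : EuclideanSpace ℝ (Fin n), (∀ j ∈ S, ⟪m j - p, v⟫ = 0) →
        ∀ y, G (y + v) = G y := by
      intro v hv y
      have h : ∀ j ∈ S, ⟪m j, v⟫ = ⟪p, v⟫ := fun j hj => by
        have := hv j hj
        rwa [inner_sub_left, sub_eq_zero] at this
      simp only [hGdef]
      rw [HH_shift hηsmooth.continuous hηsupp hηone h, inner_add_right]
      ring
    have hproj : ∀ y, G ((W.orthogonalProjectionOnto y : EuclideanSpace ℝ (Fin n))) = G y := by
      intro y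
      have hvperp : y - (W.orthogonalProjectionOnto y : EuclideanSpace ℝ (Fin n)) ∈ Wᗮ :=
        W.sub_starProjection_mem_orthogonal y
      have hv0 : ∀ j ∈ S, ⟪m j - p, y - (W.orthogonalProjectionOnto y : EuclideanSpace ℝ (Fin n))⟫ = 0 := by
        intro j hj
        exact (Submodule.mem_orthogonal W _).1 hvperp (m j - p)
          (Submodule.subset_span ⟨j, by simpa using hj, rfl⟩)
      have h1 := hshiftv _ hv0 (W.orthogonalProjectionOnto y : EuclideanSpace ℝ (Fin n))
      have h2 : (W.orthogonalProjectionOnto y : EuclideanSpace ℝ (Fin n)) +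
          (y - (W.orthogonalProjectionOnto y : EuclideanSpace ℝ (Fin n))) = y := by abel
      rw [h2] at h1
      exact h1.symm
    -- construct escaping sequence
    have hstep : ∀ N' : ℕ, ∃ x : EuclideanSpace ℝ (Fin n),
        x ∈ (W : Set (EuclideanSpace ℝ (Fin n))) ∧ (N' : ℝ) < ‖x‖ ∧ G 0 ≤ G x := by
      intro N'
      have hcompact : IsCompact ((W : Set (EuclideanSpace ℝ (Fin n))) ∩ Metric.closedBall 0 N') :=
        (isCompact_closedBall (0 : EuclideanSpace ℝ (Fin n)) N').of_isClosed_subset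
          (hWclosed.inter Metric.isClosed_closedBall) Set.inter_subset_right
      have hne : ((W : Set (EuclideanSpace ℝ (Fin n))) ∩ Metric.closedBall 0 N').Nonempty :=
        ⟨0, W.zero_mem, by simp⟩
      obtain ⟨z, hzmem, hzmax⟩ := hcompact.exists_isMaxOn hne hGcont.continuousOn
      obtain ⟨y, hy⟩ := hno z
      refine ⟨(W.orthogonalProjectionOnto y : EuclideanSpace ℝ (Fin n)), SetLike.coe_mem _, ?_, ?_⟩
      · by_contra hle
        push_neg at hle
        have hmem : (W.orthogonalProjectionOnto y : EuclideanSpace ℝ (Fin n)) ∈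
            (W : Set (EuclideanSpace ℝ (Fin n))) ∩ Metric.closedBall 0 N' :=
          ⟨SetLike.coe_mem _, by simpa [Metric.mem_closedBall, dist_zero_right] using hle⟩
        have h1 : G ((W.orthogonalProjectionOnto y : EuclideanSpace ℝ (Fin n))) ≤ G z := hzmax hmem
        rw [hproj y] at h1
        have hy' : G z < G y := hy
        linarith
      · have h0 : G 0 ≤ G z := hzmax ⟨W.zero_mem, by simp⟩
        rw [hproj y]
        have hy' : G z < G y := hy
        linarith
    choose x hxW hxnorm hxG using hstep
    have hxpos : ∀ i : ℕ, 0 < ‖x i‖ := fun i => lt_of_le_of_lt (Nat.cast_nonneg i) (hxnorm i)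
    set u : ℕ → EuclideanSpace ℝ (Fin n) := fun i => (‖x i‖)⁻¹ • x i with hudef
    have humem : ∀ i, u i ∈ (W : Set (EuclideanSpace ℝ (Fin n))) ∩ Metric.sphere 0 1 := by
      intro i
      refine ⟨W.smul_mem _ (hxW i), ?_⟩
      simp only [hudef, mem_sphere_iff_norm, sub_zero, norm_smul, norm_inv, norm_norm]
      exact inv_mul_cancel₀ (ne_of_gt (hxpos i))
    have hKcomp : IsCompact ((W : Set (EuclideanSpace ℝ (Fin n))) ∩ Metric.sphere 0 1) :=
      (isCompact_sphere (0 : EuclideanSpace ℝ (Fin n)) 1).of_isClosed_subset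
        (hWclosed.inter Metric.isClosed_sphere) Set.inter_subset_right
    obtain ⟨v, hvmem, φ, hφmono, hφtend⟩ := hKcomp.tendsto_subseq humem
    have hvW : v ∈ W := hvmem.1
    have hvnorm : ‖v‖ = 1 := by simpa [mem_sphere_iff_norm] using hvmem.2
    have htendnorm : Filter.Tendsto (fun i => ‖x (φ i)‖) Filter.atTop Filter.atTop := by
      apply Filter.tendsto_atTop_mono (fun i => le_of_lt ?_) tendsto_natCast_atTop_atTop
      calc (i : ℝ) ≤ (φ i : ℝ) := Nat.cast_le.2 hφmono.le_apply
        _ < ‖x (φ i)‖ := hxnorm (φ i)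
    set B := S.sup' hS fun j => ‖m j‖ with hBdef
    have hB0 : 0 ≤ B := by
      obtain ⟨j, hj⟩ := hS
      exact le_trans (norm_nonneg (m j)) (Finset.le_sup' (fun j => ‖m j‖) hj)
    -- nonnegativity of inner products with v
    have hnn : ∀ j ∈ S, 0 ≤ ⟪m j - p, v⟫ := by
      intro j hj
      have hlow : ∀ i : ℕ, G 0 - B * ε ≤ ⟪m j - p, x i⟫ := by
        intro i
        have h1 : HH m η S hS (x i) ≤ ⟪m j, x i⟫ + B * ε := by
          calc HH m η S hS (x i) ≤ FF m S hS (x i) + B * ε :=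
                HH_le hε hηsmooth.continuous hηnonneg hηsupp hηone (x i)
            _ ≤ ⟪m j, x i⟫ + B * ε := add_le_add_left (FF_le hj _) _
        have h2 : G 0 ≤ G (x i) := hxG i
        have h3 : G (x i) = HH m η S hS (x i) - ⟪p, x i⟫ := rfl
        have h4 : ⟪m j - p, x i⟫ = ⟪m j, x i⟫ - ⟪p, x i⟫ := inner_sub_left _ _ _
        linarith
      have hlim : Filter.Tendsto (fun i => ⟪m j - p, u (φ i)⟫) Filter.atTop
          (nhds ⟪m j - p, v⟫) :=
        ((continuous_const.inner continuous_id).tendsto v).comp hφtend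
      have hzero : Filter.Tendsto (fun i => (‖x (φ i)‖)⁻¹ * (G 0 - B * ε)) Filter.atTop
          (nhds 0) := by
        have h1 : Filter.Tendsto (fun i => (‖x (φ i)‖)⁻¹) Filter.atTop (nhds 0) :=
          Filter.Tendsto.inv_tendsto_atTop htendnorm
        simpa using h1.mul_const (G 0 - B * ε)
      refine le_of_tendsto_of_tendsto' hzero hlim ?_
      intro i
      have : ⟪m j - p, u (φ i)⟫ = (‖x (φ i)‖)⁻¹ * ⟪m j - p, x (φ i)⟫ :=
        real_inner_smul_right _ _ _
      rw [this]
      exact mul_le_mul_of_nonneg_left (hlow (φ i)) (inv_nonneg.2 (norm_nonneg _))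
    -- weights
    rw [show m '' (↑S : Set ι) = ↑(S.image m) from (Finset.coe_image).symm,
      Finset.convexHull_eq] at hp
    obtain ⟨w, hw0, hw1, hcm⟩ := hp
    have hcm' : ∑ y ∈ S.image m, w y • y = p := by
      rw [Finset.centerMass_eq_of_sum_1 _ _ hw1] at hcm
      simpa using hcm
    have hsum0 : ∑ y ∈ S.image m, w y * ⟪y - p, v⟫ = 0 := by
      have hz : ∑ y ∈ S.image m, w y • (y - p) = 0 := by
        simp_rw [smul_sub]
        rw [Finset.sum_sub_distrib, hcm', ← Finset.sum_smul, hw1, one_smul, sub_self]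
      calc ∑ y ∈ S.image m, w y * ⟪y - p, v⟫
          = ∑ y ∈ S.image m, ⟪w y • (y - p), v⟫ := by
            refine Finset.sum_congr rfl fun y hy => ?_
            rw [real_inner_smul_left]
        _ = ⟪∑ y ∈ S.image m, w y • (y - p), v⟫ := Eq.symm (sum_inner _ _ _)
        _ = 0 := by rw [hz, inner_zero_left]
    have hterm : ∀ y ∈ S.image m, w y * ⟪y - p, v⟫ = 0 := by
      refine (Finset.sum_eq_zero_iff_of_nonneg ?_).1 hsum0
      intro y hy
      obtain ⟨j, hj, rfl⟩ := Finset.mem_image.1 hy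
      exact mul_nonneg (hw0 _ hy) (hnn j hj)
    set S' : Finset ι := S.filter (fun j => ⟪m j - p, v⟫ = 0) with hS'def
    have hS'sub : S' ⊆ S := Finset.filter_subset _ S
    have hS'ne : S'.Nonempty := by
      obtain ⟨y0, hy0, hwy0⟩ := Finset.exists_ne_zero_of_sum_ne_zero (hw1 ▸ one_ne_zero)
      obtain ⟨j0, hj0, rfl⟩ := Finset.mem_image.1 hy0
      refine ⟨j0, Finset.mem_filter.2 ⟨hj0, ?_⟩⟩
      have := hterm _ hy0
      rcases mul_eq_zero.1 this with h | h
      · exact absurd h hwy0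
      · exact h
    have hS'ssub : S' ≠ S := by
      intro heq
      have hall : ∀ j ∈ S, ⟪m j - p, v⟫ = 0 := by
        intro j hj
        have hj' : j ∈ S' := by rw [heq]; exact hj
        exact (Finset.mem_filter.1 hj').2
      have hvperp : v ∈ Wᗮ := by
        rw [Submodule.mem_orthogonal]
        intro q hq
        have hsub : ((fun j => m j - p) '' ↑S) ⊆ ((Submodule.span ℝ {v})ᗮ :
            Set (EuclideanSpace ℝ (Fin n))) := by
          rintro _ ⟨j, hj, rfl⟩
          rw [SetLike.mem_coe, Submodule.mem_orthogonal]
          intro t ht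
          rw [Submodule.mem_span_singleton] at ht
          obtain ⟨c, rfl⟩ := ht
          rw [real_inner_smul_left, real_inner_comm, hall j (by simpa using hj), mul_zero]
        have hle : W ≤ (Submodule.span ℝ {v})ᗮ := Submodule.span_le.2 hsub
        have hq' := hle hq
        rw [Submodule.mem_orthogonal] at hq'
        have := hq' v (Submodule.mem_span_singleton_self v)
        rwa [real_inner_comm] at this
      have hv0 : v = 0 := by
        have hmem : v ∈ W ⊓ Wᗮ := Submodule.mem_inf.2 ⟨hvW, hvperp⟩
        rwa [Submodule.inf_orthogonal_eq_bot, Submodule.mem_bot] at hmem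
      rw [hv0, norm_zero] at hvnorm
      exact one_ne_zero hvnorm.symm
    have hcard' : S'.card < S.card :=
      Finset.card_lt_card (Finset.ssubset_iff_subset_ne.2 ⟨hS'sub, hS'ssub⟩)
    -- p lies in the convex hull of the face
    have hpS' : p ∈ convexHull ℝ (m '' ↑S') := by
      have hT'sub : S'.image m ⊆ S.image m := Finset.image_subset_image hS'sub
      have hzero : ∀ y ∈ S.image m, y ∉ S'.image m → w y = 0 := by
        intro y hy hyn
        by_contra hw
        have h0 : ⟪y - p, v⟫ = 0 := by
          rcases mul_eq_zero.1 (hterm y hy) with h | h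
          · exact absurd h hw
          · exact h
        obtain ⟨j, hj, rfl⟩ := Finset.mem_image.1 hy
        exact hyn (Finset.mem_image_of_mem m (Finset.mem_filter.2 ⟨hj, h0⟩))
      have hsum' : ∑ y ∈ S'.image m, w y = 1 := by
        rw [Finset.sum_subset hT'sub (fun y hy hyn => hzero y hy hyn)]
        exact hw1
      have hcm'' : ∑ y ∈ S'.image m, w y • y = p := by
        rw [Finset.sum_subset hT'sub (fun y hy hyn => by rw [hzero y hy hyn, zero_smul])]
        exact hcm'
      have hmem := (S'.image m).centerMass_mem_convexHull
        (fun y hy => hw0 y (hT'sub hy)) (by rw [hsum']; exact one_pos)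
        (fun y (hy : y ∈ S'.image m) => Finset.mem_coe.2 hy) (z := id)
      rw [Finset.centerMass_eq_of_sum_1 _ _ hsum'] at hmem
      simp only [id] at hmem
      rw [hcm''] at hmem
      rwa [Finset.coe_image] at hmem
    -- apply induction hypothesis
    obtain ⟨x0, hx0⟩ := IH S' hS'ne (by omega) p hpS'
    -- transfer
    set G' : EuclideanSpace ℝ (Fin n) → ℝ := fun y => HH m η S' hS'ne y - ⟪p, y⟫ with hG'def
    have hmono : ∀ y, G y ≤ G' y := fun y =>
      sub_le_sub_right
        (HH_mono hηsmooth.continuous hηnonneg hηsupp hS'ne hS'sub y) _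
    have hinv : ∀ t : ℝ, G' (x0 + t • v) = G' x0 := by
      intro t
      have h : ∀ j ∈ S', ⟪m j, t • v⟫ = ⟪p, t • v⟫ := by
        intro j hj
        have h0 : ⟪m j - p, v⟫ = 0 := (Finset.mem_filter.1 hj).2
        rw [inner_sub_left, sub_eq_zero] at h0
        rw [real_inner_smul_right, real_inner_smul_right, h0]
      simp only [hG'def]
      rw [HH_shift hηsmooth.continuous hηsupp hηone h, inner_add_right]
      ring
    have hsdne : (S \ S').Nonempty := by
      rw [Finset.sdiff_nonempty]
      intro hsub
      exact hS'ssub (Finset.Subset.antisymm hS'sub hsub)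
    set δ := (S \ S').inf' hsdne (fun j => ⟪m j - p, v⟫) with hδdef
    have hδpos : 0 < δ := by
      rw [hδdef, Finset.lt_inf'_iff]
      intro j hj
      obtain ⟨hjS, hjn⟩ := Finset.mem_sdiff.1 hj
      refine lt_of_le_of_ne (hnn j hjS) ?_
      intro heq
      exact hjn (Finset.mem_filter.2 ⟨hjS, heq.symm⟩)
    set T : ℝ := (2 * B * (‖x0‖ + ε) + 1) / δ with hTdef
    have hT0 : 0 ≤ T := le_of_lt (div_pos (by positivity) hδpos)
    have hTδ : T * δ = 2 * B * (‖x0‖ + ε) + 1 := div_mul_cancel₀ _ (ne_of_gt hδpos)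
    have hkey : ∀ q ∈ Metric.closedBall (x0 + T • v) ε,
        FF m S hS q = FF m S' hS'ne q := by
      intro q hq
      have hest : ∀ j ∈ S, j ∉ S' → ∀ l ∈ S', ⟪m l, q⟫ ≤ ⟪m j, q⟫ := by
        intro j hj hjn l hl
        have hjv : δ ≤ ⟪m j - p, v⟫ :=
          Finset.inf'_le _ (Finset.mem_sdiff.2 ⟨hj, hjn⟩)
        have hlv : ⟪m l - p, v⟫ = 0 := (Finset.mem_filter.1 hl).2
        have hdiffv : δ ≤ ⟪m j - m l, v⟫ := by
          have e1 : ⟪m j - m l, v⟫ = ⟪m j - p, v⟫ - ⟪m l - p, v⟫ := by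
            rw [inner_sub_left, inner_sub_left, inner_sub_left]
            ring
          rw [e1, hlv]
          linarith
        have hnormq : ‖q - T • v‖ ≤ ε + ‖x0‖ := by
          have h1 : ‖q - (x0 + T • v)‖ ≤ ε := by
            rw [← dist_eq_norm]
            exact Metric.mem_closedBall.1 hq
          calc ‖q - T • v‖ = ‖(q - (x0 + T • v)) + x0‖ := by
                congr 1
                abel
            _ ≤ ‖q - (x0 + T • v)‖ + ‖x0‖ := norm_add_le _ _
            _ ≤ ε + ‖x0‖ := by linarith
        have hmnorm : ‖m j - m l‖ ≤ 2 * B := by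
          calc ‖m j - m l‖ ≤ ‖m j‖ + ‖m l‖ := norm_sub_le _ _
            _ ≤ B + B := add_le_add (Finset.le_sup' (fun j => ‖m j‖) hj)
                (Finset.le_sup' (fun j => ‖m j‖) (hS'sub hl))
            _ = 2 * B := by ring
        have hsplit : ⟪m j - m l, q⟫ = T * ⟪m j - m l, v⟫ + ⟪m j - m l, q - T • v⟫ := by
          rw [← real_inner_smul_right, ← inner_add_right]
          congr 1
          abel
        have habs : |⟪m j - m l, q - T • v⟫| ≤ 2 * B * (ε + ‖x0‖) := by
          calc |⟪m j - m l, q - T • v⟫| ≤ ‖m j - m l‖ * ‖q - T • v‖ :=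
                abs_real_inner_le_norm _ _
            _ ≤ 2 * B * (ε + ‖x0‖) :=
                mul_le_mul hmnorm hnormq (norm_nonneg _) (by positivity)
        have h2 : -(2 * B * (ε + ‖x0‖)) ≤ ⟪m j - m l, q - T • v⟫ := by
          have := neg_abs_le ⟪m j - m l, q - T • v⟫
          linarith
        have h3 : T * δ ≤ T * ⟪m j - m l, v⟫ := mul_le_mul_of_nonneg_left hdiffv hT0
        have h4 : 0 ≤ ⟪m j - m l, q⟫ := by
          rw [hsplit]
          have he : 2 * B * (ε + ‖x0‖) = 2 * B * (‖x0‖ + ε) := by ring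
          nlinarith
        have h5 : ⟪m j - m l, q⟫ = ⟪m j, q⟫ - ⟪m l, q⟫ := inner_sub_left _ _ _
        linarith
      apply le_antisymm
      · exact Finset.inf'_mono (f := fun j => (⟪m j, q⟫ : ℝ)) hS'sub hS'ne
      · obtain ⟨j0, hj0, hj0eq⟩ := FF_exists (m := m) (S := S) (hS := hS) q
        by_cases hj0' : j0 ∈ S'
        · rw [hj0eq]
          exact FF_le hj0' q
        · obtain ⟨l0, hl0, hl0eq⟩ := FF_exists (m := m) (S := S') (hS := hS'ne) q
          rw [hj0eq, hl0eq]
          exact hest j0 hj0 hj0' l0 hl0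
    have hHT : HH m η S hS (x0 + T • v) = HH m η S' hS'ne (x0 + T • v) := by
      have hfun : (fun y => FF m S hS (x0 + T • v - y) * η y) =
          (fun y => FF m S' hS'ne (x0 + T • v - y) * η y) := by
        funext y
        rcases eq_or_ne (η y) 0 with h | h
        · simp [h]
        · have hy : y ∈ Metric.closedBall (0 : EuclideanSpace ℝ (Fin n)) ε := hηsupp h
          have hny : ‖y‖ ≤ ε := by simpa [dist_zero_right] using Metric.mem_closedBall.1 hy
          have hmem : x0 + T • v - y ∈ Metric.closedBall (x0 + T • v) ε := by
            rw [Metric.mem_closedBall, dist_eq_norm]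
            have he : x0 + T • v - y - (x0 + T • v) = -y := by abel
            rw [he, norm_neg]
            exact hny
          rw [hkey _ hmem]
      unfold HH
      rw [hfun]
    obtain ⟨y, hy⟩ := hno (x0 + T • v)
    have hy' : G (x0 + T • v) < G y := hy
    have hlast : G' (x0 + T • v) = G (x0 + T • v) := by
      show HH m η S' hS'ne (x0 + T • v) - ⟪p, x0 + T • v⟫ =
        HH m η S hS (x0 + T • v) - ⟪p, x0 + T • v⟫
      rw [hHT]
    have hfinal : G y ≤ G (x0 + T • v) := by
      calc G y ≤ G' y := hmono y
        _ ≤ G' x0 := hx0 y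
        _ = G' (x0 + T • v) := (hinv T).symm
        _ = G (x0 + T • v) := hlast
    linarith


end Statement2Aux

open Statement2Aux in
/-- Let `F(u) = min_j ⟪m j, u⟫` be a strictly concave piecewise linear
function (each linear piece is attained strictly somewhere, and the convex hull of the slopes
is full-dimensional).  Then for any smooth nonnegative mollifier `η` supported in the closed
`ε`-ball with total integral `1`, the mollification `H = F ⋆ η` is smooth and the range of its
gradient map is exactly the polytope `convexHull {m j}`. -/
theorem statement2 (n : ℕ) (hn : 1 ≤ n)
    (ι : Type) [Fintype ι] [Nonempty ι]
    (m : ι → EuclideanSpace ℝ (Fin n))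
    (ha : ∀ j, ∃ u : EuclideanSpace ℝ (Fin n), ∀ l, l ≠ j → ⟪m j, u⟫ < ⟪m l, u⟫)
    (hb : (interior (convexHull ℝ (Set.range m))).Nonempty)
    (F : EuclideanSpace ℝ (Fin n) → ℝ)
    (hF : ∀ u, F u = Finset.univ.inf' Finset.univ_nonempty fun j => ⟪m j, u⟫)
    (ε : ℝ) (hε : 0 < ε)
    (η : EuclideanSpace ℝ (Fin n) → ℝ)
    (hηsmooth : ContDiff ℝ (⊤ : ℕ∞) η)
    (hηnonneg : ∀ y, 0 ≤ η y)
    (hηsupp : Function.support η ⊆ Metric.closedBall 0 ε)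
    (hηone : ∫ y, η y = 1)
    (H : EuclideanSpace ℝ (Fin n) → ℝ)
    (hH : ∀ x, H x = ∫ y, F (x - y) * η y) :
    ContDiff ℝ (⊤ : ℕ∞) H ∧ Set.range (gradient H) = convexHull ℝ (Set.range m) := by
  classical
  have hHeq : H = HH m η Finset.univ Finset.univ_nonempty := by
    funext x
    rw [hH]
    unfold HH FF
    congr 1
    funext y
    rw [hF]
  have hhull : convexHull ℝ (Set.range m) =
      convexHull ℝ (m '' ↑(Finset.univ : Finset ι)) := by
    rw [Finset.coe_univ, Set.image_univ]
  constructor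
  · rw [hHeq]
    exact HH_smooth hηsmooth hηsupp
  · rw [hHeq, hhull]
    apply Set.Subset.antisymm
    · rintro _ ⟨x, rfl⟩
      exact gradient_mem hε hηsmooth hηnonneg hηsupp hηone x
    · intro p hp
      obtain ⟨x, hx⟩ := exists_isMaxOn hε hηsmooth hηnonneg hηsupp hηone
        (Fintype.card ι) Finset.univ Finset.univ_nonempty
        (le_of_eq Finset.card_univ) p hp
      exact ⟨x, isMaxOn_gradient hηsmooth hηsupp hx⟩
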